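/- If x* is an optimal solution of min_x ||Ax - b||_2 + Σ_i λ_i|x_i| with Ax* ≠ b, then u* = (Ax* - b)/||Ax* - b||_2 is optimal for the dual problem max{-b^T u : ||u||_2 ≤ 1, |a_i^T u| ≤ λ_i ∀i}; in particular u* is dual feasible and -b^T u* = ||Ax* - b||_2 + Σ_i λ_i|x*_i|. -/

import Mathlib

noncomputable def norm2 {m : ℕ} (v : Fin m → ℝ) : ℝ := Real.sqrt (∑ k, v k ^ 2)
noncomputable def dot {m : ℕ} (u v : Fin m → ℝ) : ℝ := ∑ k, u k * v k

lemma norm2_nonneg' {m : ℕ} (v : Fin m → ℝ) : 0 ≤ norm2 v := Real.sqrt_nonneg _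

lemma norm2_sq' {m : ℕ} (v : Fin m → ℝ) : norm2 v ^ 2 = ∑ k, v k ^ 2 :=
  Real.sq_sqrt (by positivity)

lemma dot_le_norm {m : ℕ} (u v : Fin m → ℝ) : dot u v ≤ norm2 u * norm2 v := by
  have h := Finset.sum_mul_sq_le_sq_mul_sq Finset.univ u v
  have h2 : dot u v ^ 2 ≤ (norm2 u * norm2 v) ^ 2 := by
    rw [mul_pow, norm2_sq', norm2_sq']; exact h
  by_contra hlt
  push_neg at hlt
  have hN : 0 ≤ norm2 u * norm2 v := mul_nonneg (norm2_nonneg' u) (norm2_nonneg' v)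
  have := pow_lt_pow_left₀ hlt hN (n := 2) two_ne_zero
  linarith

lemma helper0 {m : ℕ} (r v : Fin m → ℝ) (hR : 0 < norm2 r) (c δ : ℝ) (hδ : 0 < δ)
    (h : ∀ t : ℝ, 0 ≤ t → t ≤ δ → norm2 r ≤ norm2 (fun k => r k + t * v k) + c * t) :
    -(c * norm2 r) ≤ dot v r := by
  by_contra hcon
  push_neg at hcon
  set R := norm2 r with hRdef
  set D := dot v r with hD
  set V := (∑ k, v k ^ 2) with hV
  have hε : 0 < -(c*R) - D := by linarith
  set ε := -(c*R) - D with hεdef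
  have hc1 : (0:ℝ) < |c| + 1 := by positivity
  have hV1 : (0:ℝ) < |V - c^2| + 1 := by positivity
  set t := min δ (min (R/(|c|+1)) (ε/(|V - c^2|+1))) with ht
  have ht0 : 0 < t := lt_min hδ (lt_min (by positivity) (by positivity))
  have htδ : t ≤ δ := min_le_left _ _
  have ht1 : t ≤ R/(|c|+1) := le_trans (min_le_right _ _) (min_le_left _ _)
  have ht2 : t ≤ ε/(|V - c^2|+1) := le_trans (min_le_right _ _) (min_le_right _ _)
  have ht1' : t*(|c|+1) ≤ R := (le_div_iff₀ hc1).mp ht1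
  have ht2' : t*(|V - c^2|+1) ≤ ε := (le_div_iff₀ hV1).mp ht2
  have hct : c * t ≤ R := by nlinarith [le_abs_self c, ht0.le]
  have key := h t ht0.le htδ
  have hNsq : (norm2 (fun k => r k + t*v k))^2 = R^2 + 2*t*D + t^2*V := by
    rw [norm2_sq']
    have hr2 : R^2 = ∑ k, r k ^ 2 := norm2_sq' r
    rw [hr2, hD, hV]
    unfold dot
    rw [Finset.mul_sum, Finset.mul_sum, ← Finset.sum_add_distrib, ← Finset.sum_add_distrib]
    exact Finset.sum_congr rfl (fun k _ => by ring)
  have hN0 : 0 ≤ norm2 (fun k => r k + t*v k) := norm2_nonneg' _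
  have hsq : (R - c*t)^2 ≤ R^2 + 2*t*D + t^2*V := by
    rw [← hNsq]
    have h2 : R - c*t ≤ norm2 (fun k => r k + t*v k) := by linarith
    exact pow_le_pow_left₀ (by linarith) h2 2
  have hdiv : c^2*t - 2*c*R ≤ 2*D + t*V := by
    have hmul : t*(c^2*t - 2*c*R) ≤ t*(2*D + t*V) := by nlinarith [hsq]
    exact le_of_mul_le_mul_left hmul ht0
  have habs : t*(V - c^2) ≤ t*|V - c^2| :=
    mul_le_mul_of_nonneg_left (le_abs_self _) ht0.le
  linarith

lemma dot_smul_left {m : ℕ} (s : ℝ) (v r : Fin m → ℝ) :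
    dot (fun k => s * v k) r = s * dot v r := by
  unfold dot; rw [Finset.mul_sum]; exact Finset.sum_congr rfl fun k _ => by ring


theorem dual_optimal_from_primal_optimal {m n : ℕ}
    (A : Matrix (Fin m) (Fin n) ℝ) (b : Fin m → ℝ)
    (lam : Fin n → ℝ) (hlam : ∀ i, 0 ≤ lam i)
    (xstar : Fin n → ℝ)
    (hopt : ∀ x : Fin n → ℝ,
        norm2 (A.mulVec xstar - b) + ∑ i, lam i * |xstar i|
          ≤ norm2 (A.mulVec x - b) + ∑ i, lam i * |x i|)
    (hres : A.mulVec xstar ≠ b)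
    (ustar : Fin m → ℝ)
    (hustar : ustar = (norm2 (A.mulVec xstar - b))⁻¹ • (A.mulVec xstar - b)) :
    norm2 ustar ≤ 1 ∧
    (∀ i, |dot (fun k => A k i) ustar| ≤ lam i) ∧
    -(dot b ustar) = norm2 (A.mulVec xstar - b) + ∑ i, lam i * |xstar i| ∧
    (∀ u : Fin m → ℝ, norm2 u ≤ 1 → (∀ i, |dot (fun k => A k i) u| ≤ lam i) →
      -(dot b u) ≤ -(dot b ustar)) := by
  
  classical
  set r : Fin m → ℝ := fun k => A.mulVec xstar k - b k with hr
  have hrsub : A.mulVec xstar - b = r := funext fun k => rfl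
  rw [hrsub] at hustar hopt ⊢
  set R := norm2 r with hRdef
  set S := ∑ i, lam i * |xstar i| with hSdef
  have hS : 0 ≤ S := Finset.sum_nonneg fun i _ => mul_nonneg (hlam i) (abs_nonneg _)
  have hRpos : 0 < R := by
    rcases (norm2_nonneg' r).lt_or_eq with h | h
    · exact h
    · exfalso; apply hres
      have hsum : ∑ k, r k ^ 2 ≤ 0 := Real.sqrt_eq_zero'.mp h.symm
      have hsum0 : ∑ k, r k ^ 2 = 0 :=
        le_antisymm hsum (Finset.sum_nonneg fun k _ => sq_nonneg _)
      have hz := (Finset.sum_eq_zero_iff_of_nonneg (fun k _ => sq_nonneg (r k))).mp hsum0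
      funext k
      have hk : r k = 0 := by
        have := hz k (Finset.mem_univ k)
        exact pow_eq_zero_iff two_ne_zero |>.mp this
      have : A.mulVec xstar k - b k = 0 := hk
      linarith [this]
  have hust : ∀ k, ustar k = R⁻¹ * r k := by
    intro k; rw [hustar]; rfl
  -- Part 1 : norm of ustar is one
  have hsq1 : (norm2 ustar) ^ 2 = 1 := by
    rw [norm2_sq']
    have he : ∀ k, ustar k ^ 2 = R⁻¹ ^ 2 * r k ^ 2 := fun k => by rw [hust k]; ring
    rw [Finset.sum_congr rfl (fun k _ => he k), ← Finset.mul_sum, ← norm2_sq' r]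
    field_simp
    rfl
  have h1 : norm2 ustar ≤ 1 := by nlinarith [norm2_nonneg' ustar]
  -- perturbation in coordinate directions
  have hpert : ∀ (i : Fin n) (s : ℝ), |s| = 1 → ∀ t : ℝ, 0 ≤ t → t ≤ 1 →
      R ≤ norm2 (fun k => r k + t * (s * A k i)) + lam i * t := by
    intro i s hs t ht0 ht1
    have h := hopt (fun j => xstar j + (t * s) * (if j = i then 1 else 0))
    have hmv : ∀ k, A.mulVec (fun j => xstar j + (t * s) * (if j = i then 1 else 0)) k
        = A.mulVec xstar k + (t * s) * A k i := by
      intro k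
      simp only [Matrix.mulVec, dotProduct]
      rw [Finset.sum_congr rfl (fun j (_ : j ∈ Finset.univ) =>
        show A k j * (xstar j + (t*s) * (if j = i then 1 else 0))
            = A k j * xstar j + (if j = i then (t*s) * A k j else 0) by
          by_cases hj : j = i <;> simp [hj] <;> ring)]
      rw [Finset.sum_add_distrib, Finset.sum_ite_eq' Finset.univ i (fun j => (t*s) * A k j)]
      simp
    have heq : (A.mulVec (fun j => xstar j + (t * s) * (if j = i then 1 else 0)) - b)
        = fun k => r k + t * (s * A k i) := by
      funext k
      simp only [Pi.sub_apply, hmv k]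
      show A.mulVec xstar k + t * s * A k i - b k
          = (A.mulVec xstar k - b k) + t * (s * A k i)
      ring
    rw [heq] at h
    have hlsum : ∑ j, lam j * |xstar j + (t * s) * (if j = i then 1 else 0)|
        ≤ S + lam i * t := by
      have hb : ∀ j ∈ Finset.univ, lam j * |xstar j + (t*s) * (if j = i then 1 else 0)|
          ≤ lam j * |xstar j| + (if j = i then lam i * t else 0) := by
        intro j _
        by_cases hj : j = i
        · subst hj
          simp only [eq_self_iff_true, if_true, mul_one]
          have habs : |xstar j + t * s| ≤ |xstar j| + t := by
            calc |xstar j + t * s| ≤ |xstar j| + |t * s| := abs_add_le _ _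
              _ = |xstar j| + t := by rw [abs_mul, hs, abs_of_nonneg ht0]; ring
          nlinarith [hlam j, abs_nonneg (xstar j)]
        · simp [hj]
      calc ∑ j, lam j * |xstar j + (t*s) * (if j = i then 1 else 0)|
          ≤ ∑ j, (lam j * |xstar j| + (if j = i then lam i * t else 0)) :=
            Finset.sum_le_sum hb
        _ = S + lam i * t := by
            rw [Finset.sum_add_distrib,
              Finset.sum_ite_eq' Finset.univ i (fun _ => lam i * t)]
            simp [hSdef]
    linarith
  have hfeasR : ∀ i, |dot (fun k => A k i) r| ≤ lam i * R := by
    intro i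
    have hp1 := helper0 r (fun k => (1:ℝ) * A k i) hRpos (lam i) 1 one_pos
      (hpert i 1 (by norm_num))
    have hp2 := helper0 r (fun k => (-1:ℝ) * A k i) hRpos (lam i) 1 one_pos
      (hpert i (-1) (by norm_num))
    rw [dot_smul_left] at hp1 hp2
    rw [abs_le]; constructor <;> nlinarith
  have h2 : ∀ i, |dot (fun k => A k i) ustar| ≤ lam i := by
    intro i
    have he : dot (fun k => A k i) ustar = R⁻¹ * dot (fun k => A k i) r := by
      unfold dot
      rw [Finset.mul_sum]
      exact Finset.sum_congr rfl fun k _ => by rw [hust k]; ring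
    rw [he, abs_mul, abs_of_pos (inv_pos.mpr hRpos)]
    have := hfeasR i
    rw [inv_mul_le_iff₀ hRpos]
    nlinarith
  -- scaling perturbation
  have hscale : ∀ (s : ℝ), |s| = 1 → ∀ t : ℝ, 0 ≤ t → t ≤ 1/2 →
      R ≤ norm2 (fun k => r k + t * (s * A.mulVec xstar k)) + (s * S) * t := by
    intro s hs t ht0 ht1
    have hs' : -1 ≤ s ∧ s ≤ 1 := abs_le.mp hs.le
    have h1ts : 0 ≤ 1 + t * s := by nlinarith [hs'.1]
    have h := hopt (fun j => (1 + t * s) * xstar j)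
    have hmv : ∀ k, A.mulVec (fun j => (1 + t * s) * xstar j) k
        = (1 + t * s) * A.mulVec xstar k := by
      intro k
      simp only [Matrix.mulVec, dotProduct, Finset.mul_sum]
      exact Finset.sum_congr rfl fun j _ => by ring
    have heq : (A.mulVec (fun j => (1 + t * s) * xstar j) - b)
        = fun k => r k + t * (s * A.mulVec xstar k) := by
      funext k
      simp only [Pi.sub_apply, hmv k]
      show (1 + t * s) * A.mulVec xstar k - b k
          = (A.mulVec xstar k - b k) + t * (s * A.mulVec xstar k)
      ring
    rw [heq] at h
    have hlsum : ∑ j, lam j * |(1 + t * s) * xstar j| = (1 + t * s) * S := by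
      rw [hSdef, Finset.mul_sum]
      exact Finset.sum_congr rfl fun j _ => by
        rw [abs_mul, abs_of_nonneg h1ts]; ring
    rw [hlsum] at h
    nlinarith [h]
  have hvr : dot (A.mulVec xstar) r = -(S * R) := by
    have hp1 := helper0 r (fun k => (1:ℝ) * A.mulVec xstar k) hRpos ((1:ℝ) * S) (1/2)
      (by norm_num) (by
        intro t ht0 ht1
        have := hscale 1 (by norm_num) t ht0 ht1
        simpa using this)
    have hp2 := helper0 r (fun k => (-1:ℝ) * A.mulVec xstar k) hRpos ((-1:ℝ) * S) (1/2)
      (by norm_num) (by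
        intro t ht0 ht1
        have := hscale (-1) (by norm_num) t ht0 ht1
        simpa using this)
    rw [dot_smul_left] at hp1 hp2
    nlinarith
  have hdbr : dot b r = -(S * R) - R ^ 2 := by
    have hb : dot b r = dot (A.mulVec xstar) r - ∑ k, r k ^ 2 := by
      unfold dot
      rw [← Finset.sum_sub_distrib]
      refine Finset.sum_congr rfl fun k _ => ?_
      show b k * r k = A.mulVec xstar k * r k - r k ^ 2
      have hk : r k = A.mulVec xstar k - b k := rfl
      rw [hk]; ring
    rw [hb, hvr, ← norm2_sq' r]
  have hbu : -(dot b ustar) = R + S := by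
    have he : dot b ustar = R⁻¹ * dot b r := by
      unfold dot
      rw [Finset.mul_sum]
      exact Finset.sum_congr rfl fun k _ => by rw [hust k]; ring
    rw [he, hdbr]
    field_simp
    ring
  refine ⟨h1, h2, hbu, ?_⟩
  intro u hu1 hufeas
  have hdru : dot r u ≤ R := by
    have h := dot_le_norm r u
    nlinarith [hRpos.le, norm2_nonneg' u]
  have hsplit : dot b u = dot (A.mulVec xstar) u - dot r u := by
    unfold dot
    rw [← Finset.sum_sub_distrib]
    refine Finset.sum_congr rfl fun k _ => ?_
    show b k * u k = A.mulVec xstar k * u k - r k * u k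
    have hk : r k = A.mulVec xstar k - b k := rfl
    rw [hk]; ring
  have hswap : dot (A.mulVec xstar) u = ∑ j, xstar j * dot (fun k => A k j) u := by
    calc dot (A.mulVec xstar) u = ∑ k, ∑ j, xstar j * (A k j * u k) := by
          refine Finset.sum_congr rfl fun k _ => ?_
          show (∑ j, A k j * xstar j) * u k = _
          rw [Finset.sum_mul]
          exact Finset.sum_congr rfl fun j _ => by ring
      _ = ∑ j, ∑ k, xstar j * (A k j * u k) := Finset.sum_comm
      _ = ∑ j, xstar j * dot (fun k => A k j) u := by
          refine Finset.sum_congr rfl fun j _ => ?_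
          show ∑ k, xstar j * (A k j * u k) = xstar j * ∑ k, A k j * u k
          rw [Finset.mul_sum]
  have hlow : -S ≤ dot (A.mulVec xstar) u := by
    rw [hswap, hSdef]
    have : -∑ j, lam j * |xstar j| = ∑ j, -(lam j * |xstar j|) := by
      rw [Finset.sum_neg_distrib]
    rw [this]
    refine Finset.sum_le_sum fun j _ => ?_
    have hd : |xstar j * dot (fun k => A k j) u| ≤ |xstar j| * lam j := by
      rw [abs_mul]
      exact mul_le_mul_of_nonneg_left (hufeas j) (abs_nonneg _)
    have := neg_abs_le (xstar j * dot (fun k => A k j) u)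
    nlinarith
  rw [hbu]
  linarith
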